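/- The set of fundamental elements of the near-regular partial field 𝕌₁ = (ℤ[α, 1/α, 1/(1-α)], ⟨-1, α, 1-α⟩) is exactly {0, 1, α, 1-α, 1/(1-α), α/(α-1), (α-1)/α, 1/α}. -/

import Mathlib

set_option linter.unreachableTactic false
set_option linter.unusedTactic false
set_option maxHeartbeats 1000000

lemma one_add_pow2 (D E : ℕ) (h : 1 + 2^D = 2^E) : D = 0 ∧ E = 1 := by
  have hd : ∀ n : ℕ, n < 2^n := fun n => Nat.lt_two_pow_self
  rcases D with _|d <;> rcases E with _|e <;>
    simp only [pow_succ, pow_zero] at h <;>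
    first
    | omega
    | (have h1 := hd d; have h2 := hd e; omega)
    | (have h1 := hd d; omega)
    | (have h2 := hd e; omega)

lemma pow2_add_eq (A B C : ℕ) (h : 2^A + 2^B = 2^C) : A = B ∧ C = A + 1 := by
  have main : ∀ X Y Z : ℕ, X ≤ Y → 2^X + 2^Y = 2^Z → X = Y ∧ Z = X + 1 := by
    intro X Y Z hxy h
    have hXZ : X ≤ Z := by
      by_contra hc
      push_neg at hc
      have h1 := Nat.pow_lt_pow_right (by norm_num : 1 < 2) hc
      have h2 := Nat.two_pow_pos Y
      omega
    have h2 : 2^X * (1 + 2^(Y-X)) = 2^X * 2^(Z-X) := by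
      rw [Nat.mul_add, mul_one, ← pow_add, ← pow_add,
        Nat.add_sub_cancel' hxy, Nat.add_sub_cancel' hXZ]
      exact h
    have h3 := Nat.eq_of_mul_eq_mul_left (Nat.two_pow_pos X) h2
    have h4 := one_add_pow2 _ _ h3
    omega
  rcases le_total A B with hab | hba
  · exact main A B C hab h
  · have := main B A C hba (by omega)
    omega

lemma intkey (δ δ' : ℤ) (hδ : δ = 1 ∨ δ = -1) (hδ' : δ' = 1 ∨ δ' = -1)
    (A B C : ℕ) (hmin : A = 0 ∨ B = 0 ∨ C = 0)
    (h : δ * 2^A + δ' * 2^B = 2^C) :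
    (δ = 1 ∧ δ' = 1 ∧ A = 0 ∧ B = 0 ∧ C = 1) ∨
    (δ = 1 ∧ δ' = -1 ∧ A = 1 ∧ B = 0 ∧ C = 0) ∨
    (δ = -1 ∧ δ' = 1 ∧ A = 0 ∧ B = 1 ∧ C = 0) := by
  have cast3 : ∀ X Y Z : ℕ, (2:ℤ)^X + 2^Y = 2^Z → X = Y ∧ Z = X + 1 := by
    intro X Y Z hh
    apply pow2_add_eq
    exact_mod_cast hh
  rcases hδ with rfl|rfl <;> rcases hδ' with rfl|rfl
  · have := cast3 A B C (by linarith)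
    left
    refine ⟨rfl, rfl, ?_, ?_, ?_⟩ <;> omega
  · have := cast3 B C A (by linarith)
    right; left
    refine ⟨rfl, rfl, ?_, ?_, ?_⟩ <;> omega
  · have := cast3 A C B (by linarith)
    right; right
    refine ⟨rfl, rfl, ?_, ?_, ?_⟩ <;> omega
  · exfalso
    have h1 := Nat.two_pow_pos A
    have h2 := Nat.two_pow_pos B
    have h3 := Nat.two_pow_pos C
    have h1' : (0:ℤ) < 2^A := by exact_mod_cast h1
    have h2' : (0:ℤ) < 2^B := by exact_mod_cast h2
    have h3' : (0:ℤ) < 2^C := by exact_mod_cast h3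
    linarith

lemma qkey (δ δ' : ℚ) (hδ : δ = 1 ∨ δ = -1) (hδ' : δ' = 1 ∨ δ' = -1)
    (a b c : ℤ) (h : δ * 2^a + δ' * 2^b = 2^c) :
    (δ = 1 ∧ δ' = 1 ∧ a = c - 1 ∧ b = c - 1) ∨
    (δ = 1 ∧ δ' = -1 ∧ a = c + 1 ∧ b = c) ∨
    (δ = -1 ∧ δ' = 1 ∧ a = c ∧ b = c + 1) := by
  obtain ⟨d, hd, rfl⟩ : ∃ d : ℤ, (d = 1 ∨ d = -1) ∧ (d:ℚ) = δ := by
    rcases hδ with rfl|rfl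
    · exact ⟨1, Or.inl rfl, by norm_num⟩
    · exact ⟨-1, Or.inr rfl, by norm_num⟩
  obtain ⟨d', hd', rfl⟩ : ∃ e : ℤ, (e = 1 ∨ e = -1) ∧ (e:ℚ) = δ' := by
    rcases hδ' with rfl|rfl
    · exact ⟨1, Or.inl rfl, by norm_num⟩
    · exact ⟨-1, Or.inr rfl, by norm_num⟩
  set m := min a (min b c) with hm
  have hma : m ≤ a := min_le_left _ _
  have hmb : m ≤ b := le_trans (min_le_right _ _) (min_le_left _ _)
  have hmc : m ≤ c := le_trans (min_le_right _ _) (min_le_right _ _)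
  have h2 : (d:ℚ) * 2^(a-m) + (d':ℚ) * 2^(b-m) = 2^(c-m) := by
    have e1 : (2:ℚ)^(a-m) = 2^a * 2^(-m) := by
      rw [← zpow_add₀ (two_ne_zero)]; ring_nf
    have e2 : (2:ℚ)^(b-m) = 2^b * 2^(-m) := by
      rw [← zpow_add₀ (two_ne_zero)]; ring_nf
    have e3 : (2:ℚ)^(c-m) = 2^c * 2^(-m) := by
      rw [← zpow_add₀ (two_ne_zero)]; ring_nf
    rw [e1, e2, e3]
    linear_combination (2:ℚ)^(-m) * h
  set A := (a-m).toNat with hA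
  set B := (b-m).toNat with hB
  set C := (c-m).toNat with hC
  have hA' : (A:ℤ) = a - m := Int.toNat_of_nonneg (by omega)
  have hB' : (B:ℤ) = b - m := Int.toNat_of_nonneg (by omega)
  have hC' : (C:ℤ) = c - m := Int.toNat_of_nonneg (by omega)
  rw [← hA', ← hB', ← hC', zpow_natCast, zpow_natCast, zpow_natCast] at h2
  have h3 : d * 2^A + d' * 2^B = 2^C := by exact_mod_cast h2
  have hmin : A = 0 ∨ B = 0 ∨ C = 0 := by omega
  have := intkey d d' hd hd' A B C hmin h3
  rcases this with ⟨e1,e2,e3,e4,e5⟩|⟨e1,e2,e3,e4,e5⟩|⟨e1,e2,e3,e4,e5⟩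
  · left; subst e1 e2; norm_num; omega
  · right; left; subst e1 e2; norm_num; omega
  · right; right; subst e1 e2; norm_num; omega

lemma signed_eq (e e' s1 s2 s3 : ℚ) (he : e = 1 ∨ e = -1) (he' : e' = 1 ∨ e' = -1)
    (hs1 : s1 = 1 ∨ s1 = -1) (hs2 : s2 = 1 ∨ s2 = -1) (hs3 : s3 = 1 ∨ s3 = -1)
    (u v w : ℚ) (h : e * s1 * u + e' * s2 * v = s3 * w) :
    ∃ δ δ' : ℚ, (δ = 1 ∨ δ = -1) ∧ (δ' = 1 ∨ δ' = -1) ∧ δ * u + δ' * v = w := by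
  refine ⟨e * s1 * s3, e' * s2 * s3, ?_, ?_, ?_⟩
  · rcases he with rfl|rfl <;> rcases hs1 with rfl|rfl <;> rcases hs3 with rfl|rfl <;> norm_num
  · rcases he' with rfl|rfl <;> rcases hs2 with rfl|rfl <;> rcases hs3 with rfl|rfl <;> norm_num
  · rcases hs3 with rfl|rfl
    · linear_combination h
    · linear_combination -h

/-- The transcendental element `α` of `ℚ(α)`. -/
noncomputable def nrAlpha : RatFunc ℚ := RatFunc.X

lemma nrAlpha_ne_zero : nrAlpha ≠ 0 := RatFunc.X_ne_zero

lemma one_sub_nrAlpha_eq :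
    (1 : RatFunc ℚ) - nrAlpha = algebraMap (Polynomial ℚ) (RatFunc ℚ) (1 - Polynomial.X) := by
  rw [map_sub, map_one, RatFunc.algebraMap_X]
  rfl

lemma one_sub_nrAlpha_ne_zero : (1 : RatFunc ℚ) - nrAlpha ≠ 0 := by
  rw [one_sub_nrAlpha_eq]
  apply RatFunc.algebraMap_ne_zero
  intro h
  have := congrArg (Polynomial.eval (0:ℚ)) h
  simp at this

open Polynomial in
lemma forward (ε ε' : RatFunc ℚ) (hε : ε = 1 ∨ ε = -1) (hε' : ε' = 1 ∨ ε' = -1)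
    (i j k l : ℤ)
    (heq : ε * nrAlpha ^ i * (1 - nrAlpha) ^ j + ε' * nrAlpha ^ k * (1 - nrAlpha) ^ l = 1) :
    (ε = 1 ∧ i = 1 ∧ j = 0) ∨ (ε = 1 ∧ i = 0 ∧ j = 1) ∨
    (ε = 1 ∧ i = -1 ∧ j = 0) ∨ (ε = 1 ∧ i = 0 ∧ j = -1) ∨
    (ε = -1 ∧ i = 1 ∧ j = -1) ∨ (ε = -1 ∧ i = -1 ∧ j = 1) := by
  obtain ⟨e, he, hemap⟩ : ∃ e : ℚ, (e = 1 ∨ e = -1) ∧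
      algebraMap (Polynomial ℚ) (RatFunc ℚ) (C e) = ε := by
    rcases hε with rfl|rfl
    · exact ⟨1, Or.inl rfl, by simp⟩
    · exact ⟨-1, Or.inr rfl, by simp⟩
  obtain ⟨e', he', hemap'⟩ : ∃ f : ℚ, (f = 1 ∨ f = -1) ∧
      algebraMap (Polynomial ℚ) (RatFunc ℚ) (C f) = ε' := by
    rcases hε' with rfl|rfl
    · exact ⟨1, Or.inl rfl, by simp⟩
    · exact ⟨-1, Or.inr rfl, by simp⟩
  have hx : nrAlpha ≠ 0 := nrAlpha_ne_zero
  have hy : (1:RatFunc ℚ) - nrAlpha ≠ 0 := one_sub_nrAlpha_ne_zero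
  set a : ℤ := max 0 (max (-i) (-k)) with ha
  set b : ℤ := max 0 (max (-j) (-l)) with hb
  set A1 := (i+a).toNat with hA1def
  set A2 := (k+a).toNat with hA2def
  set A3 := a.toNat with hA3def
  set B1 := (j+b).toNat with hB1def
  set B2 := (l+b).toNat with hB2def
  set B3 := b.toNat with hB3def
  have hA1 : (A1:ℤ) = i + a := Int.toNat_of_nonneg (by omega)
  have hA2 : (A2:ℤ) = k + a := Int.toNat_of_nonneg (by omega)
  have hA3 : (A3:ℤ) = a := Int.toNat_of_nonneg (by omega)
  have hB1 : (B1:ℤ) = j + b := Int.toNat_of_nonneg (by omega)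
  have hB2 : (B2:ℤ) = l + b := Int.toNat_of_nonneg (by omega)
  have hB3 : (B3:ℤ) = b := Int.toNat_of_nonneg (by omega)
  have key : ε * nrAlpha ^ A1 * (1 - nrAlpha) ^ B1 + ε' * nrAlpha ^ A2 * (1 - nrAlpha) ^ B2
      = nrAlpha ^ A3 * (1 - nrAlpha) ^ B3 := by
    have ex1 : nrAlpha ^ A1 = nrAlpha ^ i * nrAlpha ^ a := by
      rw [← zpow_natCast, hA1, zpow_add₀ hx]
    have ex2 : nrAlpha ^ A2 = nrAlpha ^ k * nrAlpha ^ a := by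
      rw [← zpow_natCast, hA2, zpow_add₀ hx]
    have ex3 : nrAlpha ^ A3 = nrAlpha ^ a := by
      rw [← zpow_natCast, hA3]
    have ey1 : (1 - nrAlpha) ^ B1 = (1 - nrAlpha) ^ j * (1 - nrAlpha) ^ b := by
      rw [← zpow_natCast, hB1, zpow_add₀ hy]
    have ey2 : (1 - nrAlpha) ^ B2 = (1 - nrAlpha) ^ l * (1 - nrAlpha) ^ b := by
      rw [← zpow_natCast, hB2, zpow_add₀ hy]
    have ey3 : (1 - nrAlpha) ^ B3 = (1 - nrAlpha) ^ b := by
      rw [← zpow_natCast, hB3]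
    rw [ex1, ex2, ex3, ey1, ey2, ey3]
    linear_combination (nrAlpha ^ a * (1 - nrAlpha) ^ b) * heq
  have polyeq : (C e) * Polynomial.X ^ A1 * (1 - Polynomial.X) ^ B1
      + (C e') * Polynomial.X ^ A2 * (1 - Polynomial.X) ^ B2
      = Polynomial.X ^ A3 * (1 - Polynomial.X) ^ B3 := by
    apply RatFunc.algebraMap_injective ℚ
    simp only [map_add, map_mul, map_pow, map_sub, map_one, RatFunc.algebraMap_X,
      hemap, hemap']
    exact key
  have E2 := congrArg (Polynomial.eval (2:ℚ)) polyeq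
  have Em := congrArg (Polynomial.eval (-1:ℚ)) polyeq
  have Eh := congrArg (Polynomial.eval (2⁻¹:ℚ)) polyeq
  simp only [eval_add, eval_mul, eval_pow, eval_sub, eval_one, eval_X, eval_C] at E2 Em Eh
  -- E2 : e * 2^A1 * (1-2)^B1 + e' * 2^A2 * (1-2)^B2 = 2^A3 * (1-2)^B3
  have hE2 : ∃ δ δ' : ℚ, (δ = 1 ∨ δ = -1) ∧ (δ' = 1 ∨ δ' = -1) ∧
      δ * 2^A1 + δ' * 2^A2 = 2^A3 := by
    apply signed_eq e e' ((-1:ℚ)^B1) ((-1)^B2) ((-1)^B3) he he'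
      (neg_one_pow_eq_or ℚ B1) (neg_one_pow_eq_or ℚ B2) (neg_one_pow_eq_or ℚ B3)
    linear_combination E2
  have hEm : ∃ δ δ' : ℚ, (δ = 1 ∨ δ = -1) ∧ (δ' = 1 ∨ δ' = -1) ∧
      δ * 2^B1 + δ' * 2^B2 = 2^B3 := by
    apply signed_eq e e' ((-1:ℚ)^A1) ((-1)^A2) ((-1)^A3) he he'
      (neg_one_pow_eq_or ℚ A1) (neg_one_pow_eq_or ℚ A2) (neg_one_pow_eq_or ℚ A3)
    linear_combination Em
  obtain ⟨d1, d2, hd1, hd2, hE2'⟩ := hE2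
  obtain ⟨c1, c2, hc1, hc2, hEm'⟩ := hEm
  have Q2 := qkey d1 d2 hd1 hd2 (A1:ℤ) (A2:ℤ) (A3:ℤ) (by
    rw [zpow_natCast, zpow_natCast, zpow_natCast]; exact hE2')
  have Qm := qkey c1 c2 hc1 hc2 (B1:ℤ) (B2:ℤ) (B3:ℤ) (by
    rw [zpow_natCast, zpow_natCast, zpow_natCast]; exact hEm')
  have hinv : ∀ n m : ℕ, (2:ℚ)^(-((n:ℤ)+(m:ℤ))) = (2⁻¹)^n * (2⁻¹)^m := by
    intro n m
    rw [neg_add, zpow_add₀ (two_ne_zero), zpow_neg, zpow_neg, zpow_natCast, zpow_natCast,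
      inv_pow, inv_pow]
  have Qh := qkey e e' he he' (-((A1:ℤ)+(B1:ℤ))) (-((A2:ℤ)+(B2:ℤ))) (-((A3:ℤ)+(B3:ℤ))) (by
    rw [hinv, hinv, hinv]
    norm_num at Eh
    linear_combination Eh)
  have hε1 : e = 1 → ε = 1 := by intro h; rw [← hemap, h]; simp
  have hεm1 : e = -1 → ε = -1 := by intro h; rw [← hemap, h]; simp
  clear hE2' hEm' E2 Em Eh key polyeq heq
  rcases Q2 with ⟨q1,q2,q3,q4⟩|⟨q1,q2,q3,q4⟩|⟨q1,q2,q3,q4⟩ <;>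
    rcases Qm with ⟨m1,m2,m3,m4⟩|⟨m1,m2,m3,m4⟩|⟨m1,m2,m3,m4⟩ <;>
    rcases Qh with ⟨h1,h2,h3,h4⟩|⟨h1,h2,h3,h4⟩|⟨h1,h2,h3,h4⟩ <;>
    first
    | (exfalso; omega)
    | exact Or.inl ⟨hε1 h1, by omega, by omega⟩
    | exact Or.inr (Or.inl ⟨hε1 h1, by omega, by omega⟩)
    | exact Or.inr (Or.inr (Or.inl ⟨hε1 h1, by omega, by omega⟩))
    | exact Or.inr (Or.inr (Or.inr (Or.inl ⟨hε1 h1, by omega, by omega⟩)))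
    | exact Or.inr (Or.inr (Or.inr (Or.inr (Or.inl ⟨hεm1 h1, by omega, by omega⟩))))
    | exact Or.inr (Or.inr (Or.inr (Or.inr (Or.inr ⟨hεm1 h1, by omega, by omega⟩))))

/-- The near-regular partial field `𝕌₁`, viewed as the subset
`⟨-1, α, 1-α⟩ ∪ {0}` of `ℚ(α)`. -/
def U1 : Set (RatFunc ℚ) :=
  {x | x = 0 ∨ ∃ (ε : RatFunc ℚ) (i j : ℤ),
    (ε = 1 ∨ ε = -1) ∧ x = ε * nrAlpha ^ i * (1 - nrAlpha) ^ j}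

/-- `p` is a fundamental element of `𝕌₁` if `p ∈ 𝕌₁` and `1 - p ∈ 𝕌₁`. -/
def IsFund (p : RatFunc ℚ) : Prop := p ∈ U1 ∧ (1 - p) ∈ U1

/-- The fundamental elements of `𝕌₁` are exactly
`{0, 1, α, 1-α, 1/(1-α), α/(α-1), (α-1)/α, 1/α}`. -/
theorem fundamental_elements_of_U1 :
    {p : RatFunc ℚ | IsFund p} =
      ({0, 1, nrAlpha, 1 - nrAlpha, (1 - nrAlpha)⁻¹,
        nrAlpha / (nrAlpha - 1), (nrAlpha - 1) / nrAlpha, nrAlpha⁻¹} :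
        Set (RatFunc ℚ)) := by
  have hx : nrAlpha ≠ 0 := nrAlpha_ne_zero
  have hy : (1:RatFunc ℚ) - nrAlpha ≠ 0 := one_sub_nrAlpha_ne_zero
  have hx1 : nrAlpha - 1 ≠ 0 := fun h => hy (by linear_combination -h)
  ext p
  simp only [Set.mem_setOf_eq, Set.mem_insert_iff, Set.mem_singleton_iff]
  constructor
  · rintro ⟨hp1, hp2⟩
    rcases hp1 with rfl | ⟨ε, i, j, hε, rfl⟩
    · exact Or.inl rfl
    rcases hp2 with hz | ⟨ε', k, l, hε', h1p⟩
    · right; left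
      linear_combination -hz
    have heq : ε * nrAlpha ^ i * (1 - nrAlpha) ^ j + ε' * nrAlpha ^ k * (1 - nrAlpha) ^ l
        = 1 := by linear_combination -h1p
    rcases forward ε ε' hε hε' i j k l heq with
      ⟨rfl, rfl, rfl⟩ | ⟨rfl, rfl, rfl⟩ | ⟨rfl, rfl, rfl⟩ | ⟨rfl, rfl, rfl⟩ |
      ⟨rfl, rfl, rfl⟩ | ⟨rfl, rfl, rfl⟩
    · right; right; left
      simp
    · right; right; right; left
      simp
    · right; right; right; right; right; right; right
      simp
    · right; right; right; right; left
      simp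
    · right; right; right; right; right; left
      simp only [zpow_one, zpow_neg_one, neg_mul, one_mul]
      field_simp
      ring
    · right; right; right; right; right; right; left
      simp only [zpow_one, zpow_neg_one, neg_mul, one_mul]
      field_simp
      ring
  · intro hp
    rcases hp with rfl | rfl | rfl | rfl | rfl | rfl | rfl | rfl
    · exact ⟨Or.inl rfl, Or.inr ⟨1, 0, 0, Or.inl rfl, by norm_num⟩⟩
    · exact ⟨Or.inr ⟨1, 0, 0, Or.inl rfl, by norm_num⟩, Or.inl (by norm_num)⟩
    · exact ⟨Or.inr ⟨1, 1, 0, Or.inl rfl, by simp⟩,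
        Or.inr ⟨1, 0, 1, Or.inl rfl, by simp⟩⟩
    · exact ⟨Or.inr ⟨1, 0, 1, Or.inl rfl, by simp⟩,
        Or.inr ⟨1, 1, 0, Or.inl rfl, by simp⟩⟩
    · refine ⟨Or.inr ⟨1, 0, -1, Or.inl rfl, by simp⟩,
        Or.inr ⟨-1, 1, -1, Or.inr rfl, ?_⟩⟩
      simp only [zpow_one, zpow_neg_one, neg_mul, one_mul]
      field_simp
      ring
    · refine ⟨Or.inr ⟨-1, 1, -1, Or.inr rfl, ?_⟩,
        Or.inr ⟨1, 0, -1, Or.inl rfl, ?_⟩⟩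
      · simp only [zpow_one, zpow_neg_one, neg_mul, one_mul]
        field_simp
        ring
      · simp only [zpow_one, zpow_neg_one, zpow_zero, neg_mul, one_mul]
        field_simp
        ring
    · refine ⟨Or.inr ⟨-1, -1, 1, Or.inr rfl, ?_⟩,
        Or.inr ⟨1, -1, 0, Or.inl rfl, ?_⟩⟩
      · simp only [zpow_one, zpow_neg_one, neg_mul, one_mul]
        field_simp
        ring
      · simp only [zpow_neg_one, zpow_zero, one_mul, mul_one]
        field_simp
        ring
    · refine ⟨Or.inr ⟨1, -1, 0, Or.inl rfl, by simp⟩,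
        Or.inr ⟨-1, -1, 1, Or.inr rfl, ?_⟩⟩
      simp only [zpow_one, zpow_neg_one, neg_mul, one_mul]
      field_simp
      ring
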